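/- arXiv:2012.04189 — 3 statements merged into one kernel-verified Lean document; each statement's English description precedes it below -/
import Mathlib

section
/- Let q be a prime power and let k ≥ 2 be an integer. The subgroup of SL_{2k}(F_q) generated by all 2×2 block matrices of the forms [[A, 0], [0, D]], [[A, A − D], [0, D]] and [[A, 0], [D − A, D]], where A, D ∈ GL_k(F_q) and det(A)·det(D) = 1, is equal to the whole group SL_{2k}(F_q). -/
open Matrix

namespace BlockGenAux

open Matrix.SpecialLinearGroup

variable {F : Type*} [Field F] {k : ℕ}

/-- The generating set. -/
def S (F : Type*) [Field F] (k : ℕ) :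
    Set (SpecialLinearGroup (Fin k ⊕ Fin k) F) :=
  {g : SpecialLinearGroup (Fin k ⊕ Fin k) F |
    ∃ A D : Matrix (Fin k) (Fin k) F, IsUnit A ∧ IsUnit D ∧ A.det * D.det = 1 ∧
      ((g : Matrix (Fin k ⊕ Fin k) (Fin k ⊕ Fin k) F) = fromBlocks A 0 0 D ∨
       (g : Matrix (Fin k ⊕ Fin k) (Fin k ⊕ Fin k) F) = fromBlocks A (A - D) 0 D ∨
       (g : Matrix (Fin k ⊕ Fin k) (Fin k ⊕ Fin k) F) = fromBlocks A 0 (D - A) D)}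

def G (F : Type*) [Field F] (k : ℕ) : Subgroup (SpecialLinearGroup (Fin k ⊕ Fin k) F) :=
  Subgroup.closure (S F k)

lemma isUnit_of_det_mul {A D : Matrix (Fin k) (Fin k) F} (h : A.det * D.det = 1) :
    IsUnit A ∧ IsUnit D :=
  ⟨(isUnit_iff_isUnit_det A).2 (IsUnit.of_mul_eq_one _ h),
   (isUnit_iff_isUnit_det D).2 (IsUnit.of_mul_eq_one _ ((mul_comm _ _).trans h))⟩

lemma sl_ext {g h : SpecialLinearGroup (Fin k ⊕ Fin k) F}
    (e : (g : Matrix (Fin k ⊕ Fin k) (Fin k ⊕ Fin k) F) = h) : g = h :=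
  Subtype.ext e

lemma coe_mul' (g h : SpecialLinearGroup (Fin k ⊕ Fin k) F) :
    ((g * h : SpecialLinearGroup (Fin k ⊕ Fin k) F) : Matrix (Fin k ⊕ Fin k) (Fin k ⊕ Fin k) F)
      = (g : Matrix (Fin k ⊕ Fin k) (Fin k ⊕ Fin k) F) * h :=
  rfl

/-- The block diagonal element of `SL`. -/
def dSL (A D : Matrix (Fin k) (Fin k) F) (h : A.det * D.det = 1) :
    SpecialLinearGroup (Fin k ⊕ Fin k) F :=
  ⟨fromBlocks A 0 0 D, by rw [det_fromBlocks_zero₂₁]; exact h⟩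

lemma dSL_mem (A D : Matrix (Fin k) (Fin k) F) (h : A.det * D.det = 1) :
    dSL A D h ∈ G F k :=
  Subgroup.subset_closure
    ⟨A, D, (isUnit_of_det_mul h).1, (isUnit_of_det_mul h).2, h, Or.inl rfl⟩

lemma mem_of_coe_diag (g : SpecialLinearGroup (Fin k ⊕ Fin k) F)
    (A D : Matrix (Fin k) (Fin k) F) (h : A.det * D.det = 1)
    (hg : (g : Matrix (Fin k ⊕ Fin k) (Fin k ⊕ Fin k) F) = fromBlocks A 0 0 D) :
    g ∈ G F k := by
  have : g = dSL A D h := Subtype.ext hg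
  rw [this]; exact dSL_mem A D h

/-- The upper unitriangular element of `SL`. -/
def uSL (B : Matrix (Fin k) (Fin k) F) : SpecialLinearGroup (Fin k ⊕ Fin k) F :=
  ⟨fromBlocks 1 B 0 1, by simp [det_fromBlocks_zero₂₁]⟩

/-- The lower unitriangular element of `SL`. -/
def lSL (C : Matrix (Fin k) (Fin k) F) : SpecialLinearGroup (Fin k ⊕ Fin k) F :=
  ⟨fromBlocks 1 0 C 1, by simp [det_fromBlocks_zero₁₂]⟩

lemma uSL_mul (B B' : Matrix (Fin k) (Fin k) F) : uSL B * uSL B' = uSL (B + B') := by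
  apply sl_ext
  rw [coe_mul']
  simp [uSL, SpecialLinearGroup.coe_mul, fromBlocks_multiply, add_comm]

lemma lSL_mul (C C' : Matrix (Fin k) (Fin k) F) : lSL C * lSL C' = lSL (C + C') := by
  apply sl_ext
  rw [coe_mul']
  simp [lSL, SpecialLinearGroup.coe_mul, fromBlocks_multiply, add_comm]

lemma uSL_zero : (uSL 0 : SpecialLinearGroup (Fin k ⊕ Fin k) F) = 1 := by
  apply sl_ext
  simp [uSL, ← fromBlocks_one]

lemma lSL_zero : (lSL 0 : SpecialLinearGroup (Fin k ⊕ Fin k) F) = 1 := by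
  apply sl_ext
  simp [lSL, ← fromBlocks_one]

/-- The additive subgroup of `B`'s whose upper unitriangular matrix lies in `G`. -/
def upperSet (F : Type*) [Field F] (k : ℕ) : AddSubgroup (Matrix (Fin k) (Fin k) F) where
  carrier := {B | uSL B ∈ G F k}
  zero_mem' := by simp only [Set.mem_setOf_eq, uSL_zero]; exact one_mem _
  add_mem' := by
    intro a b ha hb
    simp only [Set.mem_setOf_eq] at *
    rw [← uSL_mul]; exact mul_mem ha hb
  neg_mem' := by
    intro a ha
    simp only [Set.mem_setOf_eq] at *
    have : uSL (-a) = (uSL a)⁻¹ := by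
      apply eq_inv_of_mul_eq_one_left
      rw [uSL_mul, neg_add_cancel, uSL_zero]
    rw [this]; exact inv_mem ha

def lowerSet (F : Type*) [Field F] (k : ℕ) : AddSubgroup (Matrix (Fin k) (Fin k) F) where
  carrier := {C | lSL C ∈ G F k}
  zero_mem' := by simp only [Set.mem_setOf_eq, lSL_zero]; exact one_mem _
  add_mem' := by
    intro a b ha hb
    simp only [Set.mem_setOf_eq] at *
    rw [← lSL_mul]; exact mul_mem ha hb
  neg_mem' := by
    intro a ha
    simp only [Set.mem_setOf_eq] at *
    have : lSL (-a) = (lSL a)⁻¹ := by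
      apply eq_inv_of_mul_eq_one_left
      rw [lSL_mul, neg_add_cancel, lSL_zero]
    rw [this]; exact inv_mem ha

/-- Step 1: `A - 1` is in `upperSet` for `det A = 1`. -/
lemma sub_one_mem_upperSet (A : Matrix (Fin k) (Fin k) F) (hA : A.det = 1) :
    A - 1 ∈ upperSet F k := by
  have h : A.det * (1 : Matrix (Fin k) (Fin k) F).det = 1 := by simp [hA]
  have hdet1 : (fromBlocks A (A - 1) (0 : Matrix (Fin k) (Fin k) F)
      (1 : Matrix (Fin k) (Fin k) F)).det = 1 := by
    simp [det_fromBlocks_zero₂₁, hA]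
  set g1 : SpecialLinearGroup (Fin k ⊕ Fin k) F := ⟨_, hdet1⟩ with hg1def
  have hg1 : g1 ∈ G F k :=
    Subgroup.subset_closure
      ⟨A, 1, (isUnit_of_det_mul h).1, (isUnit_of_det_mul h).2, h, Or.inr (Or.inl rfl)⟩
  have key : uSL (A - 1) * dSL A 1 h = g1 := by
    apply sl_ext
    rw [coe_mul']
    simp [uSL, dSL, hg1def, SpecialLinearGroup.coe_mul, fromBlocks_multiply]
  have h2 : uSL (A - 1) = g1 * (dSL A 1 h)⁻¹ := eq_mul_inv_of_mul_eq key
  show uSL (A - 1) ∈ G F k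
  rw [h2]
  exact mul_mem hg1 (inv_mem (dSL_mem A 1 h))

lemma sub_one_mem_lowerSet (D : Matrix (Fin k) (Fin k) F) (hD : D.det = 1) :
    D - 1 ∈ lowerSet F k := by
  have h : (1 : Matrix (Fin k) (Fin k) F).det * D.det = 1 := by simp [hD]
  have hdet1 : (fromBlocks (1 : Matrix (Fin k) (Fin k) F) (0 : Matrix (Fin k) (Fin k) F)
      (D - 1) D).det = 1 := by
    simp [det_fromBlocks_zero₁₂, hD]
  set g1 : SpecialLinearGroup (Fin k ⊕ Fin k) F := ⟨_, hdet1⟩ with hg1def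
  have hg1 : g1 ∈ G F k :=
    Subgroup.subset_closure
      ⟨1, D, (isUnit_of_det_mul h).1, (isUnit_of_det_mul h).2, h, Or.inr (Or.inr rfl)⟩
  have key : lSL (D - 1) * dSL 1 D h = g1 := by
    apply sl_ext
    rw [coe_mul']
    simp [lSL, dSL, hg1def, SpecialLinearGroup.coe_mul, fromBlocks_multiply]
  have h2 : lSL (D - 1) = g1 * (dSL 1 D h)⁻¹ := eq_mul_inv_of_mul_eq key
  show lSL (D - 1) ∈ G F k
  rw [h2]
  exact mul_mem hg1 (inv_mem (dSL_mem 1 D h))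

/-- Conjugation: if `P * B = B' * Q` and `det P * det Q = 1`, then membership transports. -/
lemma upper_conj {P Q B B' : Matrix (Fin k) (Fin k) F} (hdet : P.det * Q.det = 1)
    (hE : P * B = B' * Q) (hB : B ∈ upperSet F k) : B' ∈ upperSet F k := by
  have hg : dSL P Q hdet ∈ G F k := dSL_mem P Q hdet
  have key : uSL B' * dSL P Q hdet = dSL P Q hdet * uSL B := by
    apply sl_ext
    rw [coe_mul', coe_mul']
    simp only [SpecialLinearGroup.coe_mul, uSL, dSL, fromBlocks_multiply]
    simp [hE]
  have : uSL B' = dSL P Q hdet * uSL B * (dSL P Q hdet)⁻¹ :=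
    eq_mul_inv_of_mul_eq key
  show uSL B' ∈ G F k
  rw [this]
  exact mul_mem (mul_mem hg hB) (inv_mem hg)

lemma lower_conj {P Q C C' : Matrix (Fin k) (Fin k) F} (hdet : P.det * Q.det = 1)
    (hE : Q * C = C' * P) (hC : C ∈ lowerSet F k) : C' ∈ lowerSet F k := by
  have hg : dSL P Q hdet ∈ G F k := dSL_mem P Q hdet
  have key : lSL C' * dSL P Q hdet = dSL P Q hdet * lSL C := by
    apply sl_ext
    rw [coe_mul', coe_mul']
    simp only [SpecialLinearGroup.coe_mul, lSL, dSL, fromBlocks_multiply]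
    simp [hE]
  have : lSL C' = dSL P Q hdet * lSL C * (dSL P Q hdet)⁻¹ :=
    eq_mul_inv_of_mul_eq key
  show lSL C' ∈ G F k
  rw [this]
  exact mul_mem (mul_mem hg hC) (inv_mem hg)

lemma std_mem_upperSet_of_ne {i j : Fin k} (hij : i ≠ j) (c : F) :
    single i j c ∈ upperSet F k := by
  have := sub_one_mem_upperSet (transvection i j c) (det_transvection_of_ne i j hij c)
  simpa [Matrix.transvection] using this

lemma std_mem_lowerSet_of_ne {i j : Fin k} (hij : i ≠ j) (c : F) :
    single i j c ∈ lowerSet F k := by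
  have := sub_one_mem_lowerSet (transvection i j c) (det_transvection_of_ne i j hij c)
  simpa [Matrix.transvection] using this

lemma std_diag_mem_upperSet {i j : Fin k} (hij : i ≠ j) (c : F) :
    single i i c ∈ upperSet F k := by
  have hdet : (transvection i j (1 : F)).det * (1 : Matrix (Fin k) (Fin k) F).det = 1 := by
    simp [det_transvection_of_ne i j hij]
  have hE : transvection i j (1 : F) * single j i c =
      (single i i c + single j i c) * 1 := by
    rw [Matrix.transvection, add_mul, one_mul, mul_one, single_mul_single_same, one_mul, add_comm]
  have h1 : single i i c + single j i c ∈ upperSet F k :=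
    upper_conj hdet hE (std_mem_upperSet_of_ne (Ne.symm hij) c)
  have := sub_mem h1 (std_mem_upperSet_of_ne (Ne.symm hij) c)
  simpa using this

lemma std_diag_mem_lowerSet {i j : Fin k} (hij : i ≠ j) (c : F) :
    single i i c ∈ lowerSet F k := by
  have hdet : (1 : Matrix (Fin k) (Fin k) F).det * (transvection i j (1 : F)).det = 1 := by
    simp [det_transvection_of_ne i j hij]
  have hE : transvection i j (1 : F) * single j i c =
      (single i i c + single j i c) * 1 := by
    rw [Matrix.transvection, add_mul, one_mul, mul_one, single_mul_single_same, one_mul, add_comm]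
  have h1 : single i i c + single j i c ∈ lowerSet F k :=
    lower_conj hdet hE (std_mem_lowerSet_of_ne (Ne.symm hij) c)
  have := sub_mem h1 (std_mem_lowerSet_of_ne (Ne.symm hij) c)
  simpa using this

lemma std_mem_upperSet (hk : 2 ≤ k) (i j : Fin k) (c : F) :
    single i j c ∈ upperSet F k := by
  rcases eq_or_ne i j with rfl | hij
  · have : Nontrivial (Fin k) := Fin.nontrivial_iff_two_le.2 hk
    obtain ⟨j', hj'⟩ := exists_ne i
    exact std_diag_mem_upperSet (Ne.symm hj') c
  · exact std_mem_upperSet_of_ne hij c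

lemma std_mem_lowerSet (hk : 2 ≤ k) (i j : Fin k) (c : F) :
    single i j c ∈ lowerSet F k := by
  rcases eq_or_ne i j with rfl | hij
  · have : Nontrivial (Fin k) := Fin.nontrivial_iff_two_le.2 hk
    obtain ⟨j', hj'⟩ := exists_ne i
    exact std_diag_mem_lowerSet (Ne.symm hj') c
  · exact std_mem_lowerSet_of_ne hij c

lemma all_mem_upperSet (hk : 2 ≤ k) (B : Matrix (Fin k) (Fin k) F) : B ∈ upperSet F k := by
  rw [matrix_eq_sum_single B]
  exact sum_mem fun i _ => sum_mem fun j _ => std_mem_upperSet hk i j (B i j)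

lemma all_mem_lowerSet (hk : 2 ≤ k) (C : Matrix (Fin k) (Fin k) F) : C ∈ lowerSet F k := by
  rw [matrix_eq_sum_single C]
  exact sum_mem fun i _ => sum_mem fun j _ => std_mem_lowerSet hk i j (C i j)

/- single on a sum type, as block matrices -/
lemma std_inl_inl (i j : Fin k) (c : F) :
    single (Sum.inl i : Fin k ⊕ Fin k) (Sum.inl j) c
      = fromBlocks (single i j c) (0 : Matrix (Fin k) (Fin k) F) (0 : Matrix (Fin k) (Fin k) F) (0 : Matrix (Fin k) (Fin k) F) := by
  ext a b
  cases a <;> cases b <;> simp [single, fromBlocks]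

lemma std_inl_inr (i j : Fin k) (c : F) :
    single (Sum.inl i : Fin k ⊕ Fin k) (Sum.inr j) c
      = fromBlocks (0 : Matrix (Fin k) (Fin k) F) (single i j c) (0 : Matrix (Fin k) (Fin k) F) (0 : Matrix (Fin k) (Fin k) F) := by
  ext a b
  cases a <;> cases b <;> simp [single, fromBlocks]

lemma std_inr_inl (i j : Fin k) (c : F) :
    single (Sum.inr i : Fin k ⊕ Fin k) (Sum.inl j) c
      = fromBlocks (0 : Matrix (Fin k) (Fin k) F) (0 : Matrix (Fin k) (Fin k) F) (single i j c) (0 : Matrix (Fin k) (Fin k) F) := by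
  ext a b
  cases a <;> cases b <;> simp [single, fromBlocks]

lemma std_inr_inr (i j : Fin k) (c : F) :
    single (Sum.inr i : Fin k ⊕ Fin k) (Sum.inr j) c
      = fromBlocks (0 : Matrix (Fin k) (Fin k) F) (0 : Matrix (Fin k) (Fin k) F) (0 : Matrix (Fin k) (Fin k) F) (single i j c) := by
  ext a b
  cases a <;> cases b <;> simp [single, fromBlocks]

lemma one_sum : (1 : Matrix (Fin k ⊕ Fin k) (Fin k ⊕ Fin k) F) = fromBlocks 1 0 0 1 :=
  fromBlocks_one.symm

lemma mem_of_coe_upper (hk : 2 ≤ k) (g : SpecialLinearGroup (Fin k ⊕ Fin k) F)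
    (B : Matrix (Fin k) (Fin k) F)
    (hg : (g : Matrix (Fin k ⊕ Fin k) (Fin k ⊕ Fin k) F) = fromBlocks 1 B 0 1) :
    g ∈ G F k := by
  have : g = uSL B := Subtype.ext hg
  rw [this]
  exact all_mem_upperSet hk B

lemma mem_of_coe_lower (hk : 2 ≤ k) (g : SpecialLinearGroup (Fin k ⊕ Fin k) F)
    (C : Matrix (Fin k) (Fin k) F)
    (hg : (g : Matrix (Fin k ⊕ Fin k) (Fin k ⊕ Fin k) F) = fromBlocks 1 0 C 1) :
    g ∈ G F k := by
  have : g = lSL C := Subtype.ext hg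
  rw [this]
  exact all_mem_lowerSet hk C

/-- Every transvection of the big group lies in `G`. -/
lemma transvection_mem (hk : 2 ≤ k) (t : TransvectionStruct (Fin k ⊕ Fin k) F) :
    (⟨t.toMatrix, t.det⟩ : SpecialLinearGroup (Fin k ⊕ Fin k) F) ∈ G F k := by
  obtain ⟨p, q, hpq, c⟩ := t
  have hmat : TransvectionStruct.toMatrix ⟨p, q, hpq, c⟩ = 1 + single p q c := rfl
  cases p with
  | inl i =>
    cases q with
    | inl j =>
      have hij : i ≠ j := fun h => hpq (by rw [h])
      apply mem_of_coe_diag _ (transvection i j c) 1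
        (by simp [det_transvection_of_ne i j hij])
      show TransvectionStruct.toMatrix _ = _
      rw [hmat, std_inl_inl, one_sum, fromBlocks_add]
      simp [Matrix.transvection]
    | inr j =>
      apply mem_of_coe_upper hk _ (single i j c)
      show TransvectionStruct.toMatrix _ = _
      rw [hmat, std_inl_inr, one_sum, fromBlocks_add]
      simp
  | inr i =>
    cases q with
    | inl j =>
      apply mem_of_coe_lower hk _ (single i j c)
      show TransvectionStruct.toMatrix _ = _
      rw [hmat, std_inr_inl, one_sum, fromBlocks_add]
      simp
    | inr j =>
      have hij : i ≠ j := fun h => hpq (by rw [h])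
      apply mem_of_coe_diag _ 1 (transvection i j c)
        (by simp [det_transvection_of_ne i j hij])
      show TransvectionStruct.toMatrix _ = _
      rw [hmat, std_inr_inr, one_sum, fromBlocks_add]
      simp [Matrix.transvection]

lemma diagonal_mem (d : Fin k ⊕ Fin k → F) (hd : (diagonal d).det = 1) :
    (⟨diagonal d, hd⟩ : SpecialLinearGroup (Fin k ⊕ Fin k) F) ∈ G F k := by
  have heq : diagonal d
      = fromBlocks (diagonal (d ∘ Sum.inl)) 0 0 (diagonal (d ∘ Sum.inr)) := by
    rw [fromBlocks_diagonal]
    exact congrArg diagonal (Sum.elim_comp_inl_inr d).symm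
  apply mem_of_coe_diag _ (diagonal (d ∘ Sum.inl)) (diagonal (d ∘ Sum.inr)) _ heq
  rw [← det_fromBlocks_zero₂₁ (diagonal (d ∘ Sum.inl)) 0 (diagonal (d ∘ Sum.inr)), ← heq]
  exact hd

lemma G_eq_top (hk : 2 ≤ k) : G F k = ⊤ := by
  rw [eq_top_iff]
  intro M _
  obtain ⟨L, L', D, h⟩ :=
    Matrix.Pivot.exists_list_transvec_mul_diagonal_mul_list_transvec
      (M : Matrix (Fin k ⊕ Fin k) (Fin k ⊕ Fin k) F)
  set f : TransvectionStruct (Fin k ⊕ Fin k) F → SpecialLinearGroup (Fin k ⊕ Fin k) F :=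
    fun t => ⟨t.toMatrix, t.det⟩ with hf
  have coe_prod : ∀ (L : List (TransvectionStruct (Fin k ⊕ Fin k) F)),
      ((L.map f).prod : Matrix (Fin k ⊕ Fin k) (Fin k ⊕ Fin k) F)
        = (L.map TransvectionStruct.toMatrix).prod := by
    intro L
    induction L with
    | nil => simp
    | cons t L ih => rw [List.map_cons, List.prod_cons, coe_mul', ih]; rfl
  have hdetD : (diagonal D).det = 1 := by
    have hM : (M : Matrix (Fin k ⊕ Fin k) (Fin k ⊕ Fin k) F).det = 1 := M.2
    rw [h, det_mul, det_mul, TransvectionStruct.det_toMatrix_prod,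
      TransvectionStruct.det_toMatrix_prod, one_mul, mul_one] at hM
    exact hM
  have hMeq : M = (L.map f).prod * ⟨diagonal D, hdetD⟩ * (L'.map f).prod := by
    apply sl_ext
    rw [coe_mul']
    rw [h, ← coe_prod, ← coe_prod]
    rfl
  rw [hMeq]
  refine mul_mem (mul_mem ?_ (diagonal_mem D hdetD)) ?_
  · exact Subgroup.list_prod_mem _ (by
      intro x hx
      simp only [List.mem_map] at hx
      obtain ⟨t, _, rfl⟩ := hx
      exact transvection_mem hk t)
  · exact Subgroup.list_prod_mem _ (by
      intro x hx
      simp only [List.mem_map] at hx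
      obtain ⟨t, _, rfl⟩ := hx
      exact transvection_mem hk t)

end BlockGenAux

/-- The subgroup of `SL_{2k}(F_q)` generated by the block matrices
`[[A, 0], [0, D]]`, `[[A, A - D], [0, D]]` and `[[A, 0], [D - A, D]]`, for
`A, D ∈ GL_k(F_q)` with `det A * det D = 1`, is the whole of `SL_{2k}(F_q)`. -/
theorem block_generators_generate_SL (F : Type*) [Field F] [Fintype F]
    (k : ℕ) (hk : 2 ≤ k) :
    Subgroup.closure
      {g : SpecialLinearGroup (Fin k ⊕ Fin k) F |
        ∃ A D : Matrix (Fin k) (Fin k) F, IsUnit A ∧ IsUnit D ∧ A.det * D.det = 1 ∧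
          ((g : Matrix (Fin k ⊕ Fin k) (Fin k ⊕ Fin k) F) = fromBlocks A 0 0 D ∨
           (g : Matrix (Fin k ⊕ Fin k) (Fin k ⊕ Fin k) F) = fromBlocks A (A - D) 0 D ∨
           (g : Matrix (Fin k ⊕ Fin k) (Fin k ⊕ Fin k) F) = fromBlocks A 0 (D - A) D)}
      = ⊤ :=
  BlockGenAux.G_eq_top hk
end

section
/- Let q be a prime power and let k ≥ 2 be an integer. The subgroup of SL_{2k}(F_q) generated by all 2×2 block matrices of the forms [[A, 0], [0, D]] and [[A, 0], [D − A, D]], where A, D ∈ GL_k(F_q) and det(A)·det(D) = 1, contains the block matrix [[I, 0], [C, I]] for every k × k matrix C over F_q (where I denotes the k × k identity matrix). -/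
open Matrix

section Aux

variable {F : Type*} [Field F] [Fintype F] {k : ℕ}

/-- The lower unitriangular block matrix as an element of SL. -/
private def uLow (X : Matrix (Fin k) (Fin k) F) :
    SpecialLinearGroup (Fin k ⊕ Fin k) F :=
  ⟨fromBlocks 1 0 X 1, by rw [det_fromBlocks_zero₁₂]; simp⟩

private lemma uLow_coe (X : Matrix (Fin k) (Fin k) F) :
    (uLow X : Matrix (Fin k ⊕ Fin k) (Fin k ⊕ Fin k) F) = fromBlocks 1 0 X 1 := rfl

private lemma uLow_mul (X Y : Matrix (Fin k) (Fin k) F) :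
    uLow X * uLow Y = uLow (X + Y) := by
  apply Subtype.ext
  show (fromBlocks 1 0 X 1 : Matrix _ _ F) * fromBlocks 1 0 Y 1 = fromBlocks 1 0 (X + Y) 1
  rw [fromBlocks_multiply]
  congr 1 <;> simp [add_comm]

private lemma sbm_neg {i j : Fin k} {c : F} :
    -(single i j c) = single i j (-c) := by
  rw [← neg_one_smul F (single i j c), smul_single, neg_one_smul]

private lemma uLow_zero : (uLow 0 : SpecialLinearGroup (Fin k ⊕ Fin k) F) = 1 := by
  apply Subtype.ext
  show (fromBlocks 1 0 0 1 : Matrix _ _ F) = 1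
  exact fromBlocks_one

end Aux

/-- The subgroup of `SL_{2k}(F_q)` generated by the block matrices
`[[A, 0], [0, D]]` and `[[A, 0], [D - A, D]]`, for `A, D ∈ GL_k(F_q)` with
`det A * det D = 1`, contains `[[I, 0], [C, I]]` for every `k × k` matrix `C`. -/
theorem block_generators_contain_lower_unitriangular (F : Type*) [Field F] [Fintype F]
    (k : ℕ) (hk : 2 ≤ k) (C : Matrix (Fin k) (Fin k) F) :
    ∃ g ∈ Subgroup.closure
      {g : SpecialLinearGroup (Fin k ⊕ Fin k) F |
        ∃ A D : Matrix (Fin k) (Fin k) F, IsUnit A ∧ IsUnit D ∧ A.det * D.det = 1 ∧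
          ((g : Matrix (Fin k ⊕ Fin k) (Fin k ⊕ Fin k) F) = fromBlocks A 0 0 D ∨
           (g : Matrix (Fin k ⊕ Fin k) (Fin k ⊕ Fin k) F) = fromBlocks A 0 (D - A) D)},
      (g : Matrix (Fin k ⊕ Fin k) (Fin k ⊕ Fin k) F) = fromBlocks 1 0 C 1 := by
  set S : Set (SpecialLinearGroup (Fin k ⊕ Fin k) F) :=
    {g : SpecialLinearGroup (Fin k ⊕ Fin k) F |
      ∃ A D : Matrix (Fin k) (Fin k) F, IsUnit A ∧ IsUnit D ∧ A.det * D.det = 1 ∧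
        ((g : Matrix (Fin k ⊕ Fin k) (Fin k ⊕ Fin k) F) = fromBlocks A 0 0 D ∨
         (g : Matrix (Fin k ⊕ Fin k) (Fin k ⊕ Fin k) F) = fromBlocks A 0 (D - A) D)} with hS
  set P : Matrix (Fin k) (Fin k) F → Prop := fun X => uLow X ∈ Subgroup.closure S with hP
  -- P is closed under addition and contains 0 and negatives
  have Padd : ∀ X Y, P X → P Y → P (X + Y) := by
    intro X Y hX hY
    have := mul_mem hX hY
    rwa [uLow_mul] at this
  have Pzero : P 0 := by
    rw [hP]; simp only
    rw [uLow_zero]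
    exact one_mem _
  have Pneg : ∀ X, P X → P (-X) := by
    intro X hX
    have h1 : uLow (-X) = (uLow X)⁻¹ := by
      rw [eq_inv_iff_mul_eq_one, uLow_mul, neg_add_cancel, uLow_zero]
    rw [hP]; simp only
    rw [h1]
    exact inv_mem hX
  -- Key step: for every M of determinant 1, P (1 - M)
  have key : ∀ M : Matrix (Fin k) (Fin k) F, M.det = 1 → P (1 - M) := by
    intro M hM
    have hMu : IsUnit M := by
      rw [Matrix.isUnit_iff_isUnit_det, hM]; exact isUnit_one
    have hdet1 : (fromBlocks M 0 0 (1 : Matrix (Fin k) (Fin k) F)).det = 1 := by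
      rw [det_fromBlocks_zero₂₁, hM, det_one, mul_one]
    have hdet2 : (fromBlocks M 0 (1 - M) (1 : Matrix (Fin k) (Fin k) F)).det = 1 := by
      rw [det_fromBlocks_zero₁₂, hM, det_one, mul_one]
    set g1 : SpecialLinearGroup (Fin k ⊕ Fin k) F := ⟨_, hdet1⟩ with hg1
    set g2 : SpecialLinearGroup (Fin k ⊕ Fin k) F := ⟨_, hdet2⟩ with hg2
    have hg1S : g1 ∈ S := ⟨M, 1, hMu, isUnit_one, by rw [hM, det_one, mul_one],
      Or.inl rfl⟩
    have hg2S : g2 ∈ S := ⟨M, 1, hMu, isUnit_one, by rw [hM, det_one, mul_one],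
      Or.inr rfl⟩
    have hmul : g1 * uLow (1 - M) = g2 := by
      apply Subtype.ext
      show (fromBlocks M 0 0 1 : Matrix _ _ F) * fromBlocks 1 0 (1 - M) 1 =
        fromBlocks M 0 (1 - M) 1
      rw [fromBlocks_multiply]
      congr 1 <;> simp
    have : uLow (1 - M) = g1⁻¹ * g2 := by
      rw [← hmul]; group
    rw [hP]; simp only
    rw [this]
    exact mul_mem (inv_mem (Subgroup.subset_closure hg1S))
      (Subgroup.subset_closure hg2S)
  -- off-diagonal standard basis matrices
  have Poff : ∀ (i j : Fin k), i ≠ j → ∀ c : F, P (single i j c) := by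
    intro i j hij c
    have h := key (transvection i j (-c)) (det_transvection_of_ne i j hij (-c))
    have heq : (1 : Matrix (Fin k) (Fin k) F) - transvection i j (-c)
        = single i j c := by
      rw [transvection, ← sbm_neg]
      abel
    rwa [heq] at h
  -- diagonal standard basis matrices
  have Pdiag : ∀ (i : Fin k) (c : F), P (single i i c) := by
    intro i c
    obtain ⟨j, hj⟩ : ∃ j : Fin k, j ≠ i :=
      Fintype.exists_ne_of_one_lt_card (by simp; omega) i
    set M : Matrix (Fin k) (Fin k) F := transvection i j c * transvection j i (-1) with hM
    have hMdet : M.det = 1 := by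
      rw [hM, det_mul, det_transvection_of_ne i j hj.symm c,
        det_transvection_of_ne j i hj (-1), one_mul]
    have hMexp : M = 1 + single j i (-1) + single i j c
        + single i i (c * -1) := by
      rw [hM, transvection, transvection]
      simp only [add_mul, mul_add, one_mul, mul_one, single_mul_single_same]
      abel
    have hMeq : (1 : Matrix (Fin k) (Fin k) F) - M
        = single i i c + single i j (-c) + single j i 1 := by
      rw [hMexp, mul_neg_one]
      rw [show single i i (-c) = -(single i i c) from sbm_neg.symm,
        show single i j (-c) = -(single i j c) from sbm_neg.symm,
        show single j i (-1 : F) = -(single j i 1) from sbm_neg.symm]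
      abel
    have h1 := key M hMdet
    rw [hMeq] at h1
    have h2 := Padd _ _ (Padd _ _ h1 (Poff i j hj.symm c)) (Poff j i hj (-1))
    have heq2 : single i i c + single i j (-c) + single j i 1
        + single i j c + single j i (-1) = single i i c := by
      rw [show single i j (-c) = -(single i j c) from sbm_neg.symm,
        show single j i (-1 : F) = -(single j i 1) from sbm_neg.symm]
      abel
    rwa [heq2] at h2
  -- every matrix
  have Pall : P C := by
    rw [matrix_eq_sum_single C]
    refine Finset.sum_induction _ P Padd Pzero ?_
    intro i _
    refine Finset.sum_induction _ P Padd Pzero ?_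
    intro j _
    by_cases hij : i = j
    · subst hij; exact Pdiag i (C i i)
    · exact Poff i j hij (C i j)
  exact ⟨uLow C, Pall, rfl⟩
end

section
/- Let q be a prime power and let n, k, i be integers with 1 ≤ k, 2k ≤ n and 0 ≤ i ≤ k − 1. Then the generalised Johnson graph J_q(n, k)_i — the simple graph whose vertices are the k-dimensional subspaces of (F_q)^n, with two subspaces x and y adjacent if and only if dim(x ∩ y) = i — is connected. -/
open Module Submodule

section Helpers

variable {F : Type*} [Field F] {V : Type*} [AddCommGroup V] [Module F V]
  [FiniteDimensional F V]

/-- Adjoining a vector not in `v` raises the finrank by one. -/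
lemma aux_finrank_sup_span {v : Submodule F V} {a : V} (ha : a ∉ v) :
    finrank F ↥(v ⊔ (F ∙ a)) = finrank F ↥v + 1 := by
  have ha0 : a ≠ 0 := fun h => ha (h ▸ v.zero_mem)
  have hinf : v ⊓ (F ∙ a) = ⊥ := by
    rw [eq_bot_iff]
    rintro x ⟨hxv, hxa⟩
    obtain ⟨c, rfl⟩ := Submodule.mem_span_singleton.mp hxa
    rcases eq_or_ne c 0 with rfl | hc
    · simp
    · exact absurd (by simpa [smul_smul, inv_mul_cancel₀ hc] using v.smul_mem c⁻¹ hxv) ha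
  have h := Submodule.finrank_sup_add_finrank_inf_eq v (F ∙ a)
  rw [hinf, finrank_bot, finrank_span_singleton ha0] at h
  omega

lemma aux_exists_not_mem_two {p q : Submodule F V} (hp : p ≠ ⊤) (hq : q ≠ ⊤) :
    ∃ a : V, a ∉ p ∧ a ∉ q := by
  have hep : ∃ a, a ∉ p := by
    by_contra h; push_neg at h; exact hp (eq_top_iff'.mpr h)
  have heq : ∃ a, a ∉ q := by
    by_contra h; push_neg at h; exact hq (eq_top_iff'.mpr h)
  obtain ⟨a, ha⟩ := hep
  obtain ⟨b, hb⟩ := heq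
  by_cases hab : a ∈ q
  · by_cases hba : b ∈ p
    · refine ⟨a + b, fun h => ?_, fun h => ?_⟩
      · exact ha (by simpa using p.sub_mem h hba)
      · exact hb (by simpa using q.sub_mem h hab)
    · exact ⟨b, hba, hb⟩
  · exact ⟨a, ha, hab⟩

lemma aux_ne_top_of_finrank_lt {p : Submodule F V} (h : finrank F ↥p < finrank F V) :
    p ≠ ⊤ := by
  rintro rfl
  rw [finrank_top] at h
  exact lt_irrefl _ h

/-- There is a submodule of any intermediate finrank between two nested submodules. -/
lemma aux_exists_finrank_between (p q : Submodule F V) (hpq : p ≤ q) (d : ℕ)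
    (h1 : finrank F ↥p ≤ d) (h2 : d ≤ finrank F ↥q) :
    ∃ r : Submodule F V, p ≤ r ∧ r ≤ q ∧ finrank F ↥r = d := by
  obtain ⟨c, hc⟩ := Nat.exists_eq_add_of_le h1
  clear h1
  induction c generalizing p with
  | zero => exact ⟨p, le_rfl, hpq, by omega⟩
  | succ c ih =>
    have hlt : finrank F ↥p < finrank F ↥q := by omega
    have hne : ¬ q ≤ p := fun h =>
      absurd (Submodule.finrank_mono h) (by omega)
    obtain ⟨a, haq, hap⟩ := SetLike.not_le_iff_exists.mp hne
    have hsup : p ⊔ (F ∙ a) ≤ q := sup_le hpq ((Submodule.span_singleton_le_iff_mem a q).mpr haq)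
    obtain ⟨r, hr1, hr2, hr3⟩ := ih (p ⊔ (F ∙ a)) hsup (by rw [aux_finrank_sup_span hap]; omega)
    exact ⟨r, le_trans (le_sup_left) hr1, hr2, hr3⟩

/-- We can find an `m`-dimensional subspace intersecting two given subspaces trivially,
provided there is enough room. -/
lemma aux_exists_avoiding (y y' : Submodule F V) (m : ℕ)
    (h1 : finrank F ↥y + m ≤ finrank F V) (h2 : finrank F ↥y' + m ≤ finrank F V) :
    ∃ v : Submodule F V, finrank F ↥v = m ∧ v ⊓ y = ⊥ ∧ v ⊓ y' = ⊥ := by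
  induction m with
  | zero => exact ⟨⊥, finrank_bot F V, bot_inf_eq y, bot_inf_eq y'⟩
  | succ m ih =>
    obtain ⟨v, hv, hvy, hvy'⟩ := ih (by omega) (by omega)
    have hsupy : finrank F ↥(y ⊔ v) < finrank F V := by
      have := Submodule.finrank_sup_add_finrank_inf_eq y v
      omega
    have hsupy' : finrank F ↥(y' ⊔ v) < finrank F V := by
      have := Submodule.finrank_sup_add_finrank_inf_eq y' v
      omega
    obtain ⟨a, hay, hay'⟩ := aux_exists_not_mem_two (aux_ne_top_of_finrank_lt hsupy)
      (aux_ne_top_of_finrank_lt hsupy')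
    have hav : a ∉ v := fun h => hay (le_sup_right (a := y) h)
    refine ⟨v ⊔ (F ∙ a), by rw [aux_finrank_sup_span hav, hv], ?_, ?_⟩
    · rw [eq_bot_iff]
      rintro x ⟨hxv, hxy⟩
      obtain ⟨b, hb, c, hc, rfl⟩ := Submodule.mem_sup.mp hxv
      obtain ⟨t, rfl⟩ := Submodule.mem_span_singleton.mp hc
      rcases eq_or_ne t 0 with rfl | ht
      · have : b ∈ v ⊓ y := ⟨hb, by simpa using hxy⟩
        rw [hvy] at this; simpa using this
      · exfalso
        have hta : t • a ∈ y ⊔ v := by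
          have : t • a = (b + t • a) - b := by abel
          rw [this]
          exact Submodule.sub_mem _ (le_sup_left (b := v) hxy) (le_sup_right (a := y) hb)
        have : a ∈ y ⊔ v := by
          simpa [smul_smul, inv_mul_cancel₀ ht] using Submodule.smul_mem _ t⁻¹ hta
        exact hay this
    · rw [eq_bot_iff]
      rintro x ⟨hxv, hxy⟩
      obtain ⟨b, hb, c, hc, rfl⟩ := Submodule.mem_sup.mp hxv
      obtain ⟨t, rfl⟩ := Submodule.mem_span_singleton.mp hc
      rcases eq_or_ne t 0 with rfl | ht
      · have : b ∈ v ⊓ y' := ⟨hb, by simpa using hxy⟩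
        rw [hvy'] at this; simpa using this
      · exfalso
        have hta : t • a ∈ y' ⊔ v := by
          have : t • a = (b + t • a) - b := by abel
          rw [this]
          exact Submodule.sub_mem _ (le_sup_left (b := v) hxy) (le_sup_right (a := y') hb)
        have : a ∈ y' ⊔ v := by
          simpa [smul_smul, inv_mul_cancel₀ ht] using Submodule.smul_mem _ t⁻¹ hta
        exact hay' this

end Helpers

/-- The generalised Johnson graph `J_q(n, k)_i`: vertices are the `k`-dimensional
subspaces of `(F_q)^n`, and two distinct vertices are adjacent iff they intersect in an
`i`-dimensional subspace. -/
def johnsonGraph (F : Type*) [Field F] (n k i : ℕ) :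
    SimpleGraph {W : Submodule F (Fin n → F) // Module.finrank F ↥W = k} where
  Adj x y := x ≠ y ∧ Module.finrank F ↥(x.1 ⊓ y.1) = i
  symm := ⟨by
    rintro x y ⟨hne, hdim⟩
    exact ⟨hne.symm, by rwa [inf_comm]⟩⟩
  loopless := ⟨fun x h => h.1 rfl⟩

section Main

variable {F : Type*} [Field F] {n k i : ℕ}

/-- Two vertices whose subspaces meet in dimension `k - 1` are reachable in the
generalised Johnson graph. -/
lemma johnsonGraph_reachable_of_hyper (hk : 1 ≤ k) (hn : 2 * k ≤ n) (hi : i ≤ k - 1)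
    (x y : {W : Submodule F (Fin n → F) // Module.finrank F ↥W = k})
    (hxy : Module.finrank F ↥(x.1 ⊓ y.1) = k - 1) :
    (johnsonGraph F n k i).Reachable x y := by
  have hV : finrank F (Fin n → F) = n := Module.finrank_fin_fun F
  -- pick u ≤ x ⊓ y of dimension i
  obtain ⟨u, -, hu2, hu3⟩ := aux_exists_finrank_between ⊥ (x.1 ⊓ y.1) bot_le i
    (by simpa using Nat.zero_le i) (by omega)
  -- pick v of dimension k - i avoiding x and y
  obtain ⟨v, hv1, hvx, hvy⟩ := aux_exists_avoiding x.1 y.1 (k - i)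
    (by rw [x.2, hV]; omega) (by rw [y.2, hV]; omega)
  set z := u ⊔ v with hz
  have hux : u ≤ x.1 := le_trans hu2 inf_le_left
  have huy : u ≤ y.1 := le_trans hu2 inf_le_right
  have huv : u ⊓ v = ⊥ := by
    rw [eq_bot_iff]
    intro w ⟨hw1, hw2⟩
    rw [← hvx]
    exact ⟨hw2, hux hw1⟩
  have hzk : finrank F ↥z = k := by
    have h := Submodule.finrank_sup_add_finrank_inf_eq u v
    rw [huv, finrank_bot, hu3, hv1] at h
    rw [hz]; omega
  have hzx : z ⊓ x.1 = u := by
    apply le_antisymm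
    · rintro w ⟨hwz, hwx⟩
      obtain ⟨a, ha, b, hb, rfl⟩ := Submodule.mem_sup.mp hwz
      have hbx : b ∈ v ⊓ x.1 := ⟨hb, by simpa using x.1.sub_mem hwx (hux ha)⟩
      rw [hvx] at hbx
      simpa [(Submodule.mem_bot _).mp hbx] using ha
    · exact le_inf le_sup_left hux
  have hzy : z ⊓ y.1 = u := by
    apply le_antisymm
    · rintro w ⟨hwz, hwy⟩
      obtain ⟨a, ha, b, hb, rfl⟩ := Submodule.mem_sup.mp hwz
      have hby : b ∈ v ⊓ y.1 := ⟨hb, by simpa using y.1.sub_mem hwy (huy ha)⟩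
      rw [hvy] at hby
      simpa [(Submodule.mem_bot _).mp hby] using ha
    · exact le_inf le_sup_left huy
  set Z : {W : Submodule F (Fin n → F) // Module.finrank F ↥W = k} := ⟨z, hzk⟩ with hZ
  have hik : i < k := by omega
  have hxZ : (johnsonGraph F n k i).Adj x Z := by
    constructor
    · intro hEq
      have hx1 : x.1 = z := congrArg Subtype.val hEq
      have h2 : finrank F ↥(z ⊓ x.1) = k := by rw [hx1, inf_idem, hzk]
      rw [hzx, hu3] at h2
      omega
    · show finrank F ↥(x.1 ⊓ z) = i
      rw [inf_comm, hzx, hu3]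
  have hZy : (johnsonGraph F n k i).Adj Z y := by
    constructor
    · intro hEq
      have hy1 : z = y.1 := congrArg Subtype.val hEq
      have h2 : finrank F ↥(z ⊓ y.1) = k := by rw [← hy1, inf_idem, hzk]
      rw [hzy, hu3] at h2
      omega
    · show finrank F ↥(z ⊓ y.1) = i
      rw [hzy, hu3]
  exact hxZ.reachable.trans hZy.reachable

theorem johnsonGraph_preconnected (hk : 1 ≤ k) (hn : 2 * k ≤ n) (hi : i ≤ k - 1) :
    (johnsonGraph F n k i).Preconnected := by
  have hV : finrank F (Fin n → F) = n := Module.finrank_fin_fun F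
  suffices h : ∀ (c : ℕ) (x y : {W : Submodule F (Fin n → F) // Module.finrank F ↥W = k}),
      k - Module.finrank F ↥(x.1 ⊓ y.1) ≤ c → (johnsonGraph F n k i).Reachable x y by
    intro x y
    exact h k x y (by omega)
  intro c
  induction c with
  | zero =>
    intro x y hxy
    have hle : x.1 ⊓ y.1 ≤ x.1 := inf_le_left
    have hfin : finrank F ↥(x.1 ⊓ y.1) ≤ k :=
      le_trans (Submodule.finrank_mono hle) (le_of_eq x.2)
    have heq : x.1 ⊓ y.1 = x.1 := Submodule.eq_of_le_of_finrank_le hle (by rw [x.2]; omega)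
    have hxley : x.1 ≤ y.1 := inf_eq_left.mp heq
    have : x.1 = y.1 := Submodule.eq_of_le_of_finrank_le hxley (by rw [x.2, y.2])
    rw [Subtype.ext this]
  | succ c ih =>
    intro x y hxy
    by_cases hxyeq : x = y
    · rw [hxyeq]
    -- x.1 is not contained in y.1
    have hnle : ¬ x.1 ≤ y.1 := fun h =>
      hxyeq (Subtype.ext (Submodule.eq_of_le_of_finrank_le h (by rw [x.2, y.2])))
    obtain ⟨b, hbx, hby⟩ := SetLike.not_le_iff_exists.mp hnle
    set d := finrank F ↥(x.1 ⊓ y.1) with hd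
    have hdk : d < k := by
      rcases lt_or_ge d k with h | h
      · exact h
      · exact absurd (Submodule.eq_of_le_of_finrank_le inf_le_left (by rw [x.2]; omega)) 
          (fun heq => hnle (inf_eq_left.mp heq))
    -- choose a hyperplane h of y containing x ⊓ y
    obtain ⟨h, hh1, hh2, hh3⟩ := aux_exists_finrank_between (x.1 ⊓ y.1) y.1 inf_le_right
      (k - 1) (by omega) (by rw [y.2]; omega)
    have hbh : b ∉ h := fun hb => hby (hh2 hb)
    set y' := h ⊔ (F ∙ b) with hy'
    have hy'k : finrank F ↥y' = k := by
      rw [hy', aux_finrank_sup_span hbh, hh3]; omega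
    set Y' : {W : Submodule F (Fin n → F) // Module.finrank F ↥W = k} := ⟨y', hy'k⟩ with hY'
    -- y' ⊓ y = h
    have hy'y : y' ⊓ y.1 = h := by
      apply le_antisymm
      · rintro w ⟨hwz, hwy⟩
        obtain ⟨a, ha, cb, hcb, rfl⟩ := Submodule.mem_sup.mp hwz
        obtain ⟨t, rfl⟩ := Submodule.mem_span_singleton.mp hcb
        rcases eq_or_ne t 0 with rfl | ht
        · simpa using ha
        · exfalso
          have : t • b ∈ y.1 := by simpa using y.1.sub_mem hwy (hh2 ha)
          exact hby (by simpa [smul_smul, inv_mul_cancel₀ ht] using y.1.smul_mem t⁻¹ this)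
      · exact le_inf le_sup_left hh2
    -- x ⊓ y' contains (x ⊓ y) ⊔ span b, of dimension d + 1
    have hsub : (x.1 ⊓ y.1) ⊔ (F ∙ b) ≤ x.1 ⊓ y' := by
      apply sup_le (le_inf inf_le_left (le_trans hh1 le_sup_left))
      exact (Submodule.span_singleton_le_iff_mem b _).mpr ⟨hbx, le_sup_right (a := h)
        (Submodule.mem_span_singleton_self b)⟩
    have hbxy : b ∉ x.1 ⊓ y.1 := fun hb => hby hb.2
    have hd1 : finrank F ↥((x.1 ⊓ y.1) ⊔ (F ∙ b)) = d + 1 := by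
      rw [aux_finrank_sup_span hbxy]
    have hge : d + 1 ≤ finrank F ↥(x.1 ⊓ Y'.1) := by
      rw [← hd1]
      exact Submodule.finrank_mono hsub
    -- conclude
    have h1 : (johnsonGraph F n k i).Reachable x Y' := ih x Y' (by omega)
    have h2 : (johnsonGraph F n k i).Reachable Y' y := by
      apply johnsonGraph_reachable_of_hyper hk hn hi
      rw [hY']
      show finrank F ↥(y' ⊓ y.1) = k - 1
      rw [hy'y, hh3]
    exact h1.trans h2

end Main

/-- For `1 ≤ k`, `2k ≤ n` and `0 ≤ i ≤ k - 1`, the generalised Johnson graph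
`J_q(n, k)_i` is connected. -/
theorem johnsonGraph_connected (F : Type*) [Field F] [Fintype F] (n k i : ℕ)
    (hk : 1 ≤ k) (hn : 2 * k ≤ n) (hi : i ≤ k - 1) :
    (johnsonGraph F n k i).Connected := by
  have hV : finrank F (Fin n → F) = n := Module.finrank_fin_fun F
  have hne : Nonempty {W : Submodule F (Fin n → F) // Module.finrank F ↥W = k} := by
    obtain ⟨r, -, -, hr⟩ := aux_exists_finrank_between (⊥ : Submodule F (Fin n → F)) ⊤
      bot_le k (by simp) (by rw [finrank_top]; omega)
    exact ⟨⟨r, hr⟩⟩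
  exact ⟨johnsonGraph_preconnected hk hn hi⟩
end
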